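/- The function G(x) := −3x³ − 9x²·cos x·sin x + 6x·sin²x − 9x·cos²x·sin²x + 14·cos x·sin³x + cos³x·sin³x satisfies G(x) < 0 for all x ∈ (0, π/2). -/

import Mathlib

open Real

lemma nonneg_of_deriv {f f' : ℝ → ℝ} (hd : ∀ t, HasDerivAt f (f' t) t)
    (h0 : f 0 = 0) (h' : ∀ t, 0 ≤ t → 0 ≤ f' t) {x : ℝ} (hx : 0 ≤ x) : 0 ≤ f x := by
  have hmono : MonotoneOn f (Set.Ici (0:ℝ)) := by
    apply monotoneOn_of_deriv_nonneg (convex_Ici 0)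
    · exact fun t _ => (hd t).continuousAt.continuousWithinAt
    · exact fun t _ => (hd t).differentiableAt.differentiableWithinAt
    · intro t ht
      rw [interior_Ici] at ht
      rw [(hd t).deriv]
      exact h' t ht.le
  have := hmono Set.self_mem_Ici (Set.mem_Ici.2 hx) hx
  simpa [h0] using this

lemma sin_ge_deg3 {x : ℝ} (hx : 0 ≤ x) : x - x ^ 3 / 6 ≤ sin x := by
  have h := nonneg_of_deriv (f := fun t => sin t - (t - t ^ 3 / 6))
    (f' := fun t => cos t - (1 - t ^ 2 / 2))
    (fun t => by
      have := (Real.hasDerivAt_sin t).sub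
        ((hasDerivAt_id t).sub ((hasDerivAt_pow 3 t).div_const 6))
      refine this.congr_deriv ?_
      push_cast
      ring)
    (by norm_num)
    (fun t _ => by nlinarith [Real.one_sub_sq_div_two_le_cos (x := t)]) hx
  linarith [h]

lemma cos_le_deg4 {x : ℝ} (hx : 0 ≤ x) : cos x ≤ 1 - x ^ 2 / 2 + x ^ 4 / 24 := by
  have h := nonneg_of_deriv (f := fun t => 1 - t ^ 2 / 2 + t ^ 4 / 24 - cos t)
    (f' := fun t => sin t - (t - t ^ 3 / 6))
    (fun t => by
      have := (((hasDerivAt_const t (1:ℝ)).sub ((hasDerivAt_pow 2 t).div_const 2)).add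
        ((hasDerivAt_pow 4 t).div_const 24)).sub (Real.hasDerivAt_cos t)
      refine this.congr_deriv ?_
      push_cast
      ring)
    (by norm_num)
    (fun t ht => by linarith [sin_ge_deg3 ht]) hx
  linarith [h]

lemma sin_le_deg5 {x : ℝ} (hx : 0 ≤ x) : sin x ≤ x - x ^ 3 / 6 + x ^ 5 / 120 := by
  have h := nonneg_of_deriv (f := fun t => t - t ^ 3 / 6 + t ^ 5 / 120 - sin t)
    (f' := fun t => 1 - t ^ 2 / 2 + t ^ 4 / 24 - cos t)
    (fun t => by
      have := (((hasDerivAt_id t).sub ((hasDerivAt_pow 3 t).div_const 6)).add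
        ((hasDerivAt_pow 5 t).div_const 120)).sub (Real.hasDerivAt_sin t)
      refine this.congr_deriv ?_
      push_cast
      ring)
    (by norm_num)
    (fun t ht => by linarith [cos_le_deg4 ht]) hx
  linarith [h]

lemma cos_ge_deg6 {x : ℝ} (hx : 0 ≤ x) :
    1 - x ^ 2 / 2 + x ^ 4 / 24 - x ^ 6 / 720 ≤ cos x := by
  have h := nonneg_of_deriv
    (f := fun t => cos t - (1 - t ^ 2 / 2 + t ^ 4 / 24 - t ^ 6 / 720))
    (f' := fun t => t - t ^ 3 / 6 + t ^ 5 / 120 - sin t)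
    (fun t => by
      have := (Real.hasDerivAt_cos t).sub
        ((((hasDerivAt_const t (1:ℝ)).sub ((hasDerivAt_pow 2 t).div_const 2)).add
          ((hasDerivAt_pow 4 t).div_const 24)).sub ((hasDerivAt_pow 6 t).div_const 720))
      refine this.congr_deriv ?_
      push_cast
      ring)
    (by norm_num)
    (fun t ht => by linarith [sin_le_deg5 ht]) hx
  linarith [h]

lemma sin_ge_deg7 {x : ℝ} (hx : 0 ≤ x) :
    x - x ^ 3 / 6 + x ^ 5 / 120 - x ^ 7 / 5040 ≤ sin x := by
  have h := nonneg_of_deriv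
    (f := fun t => sin t - (t - t ^ 3 / 6 + t ^ 5 / 120 - t ^ 7 / 5040))
    (f' := fun t => cos t - (1 - t ^ 2 / 2 + t ^ 4 / 24 - t ^ 6 / 720))
    (fun t => by
      have := (Real.hasDerivAt_sin t).sub
        ((((hasDerivAt_id t).sub ((hasDerivAt_pow 3 t).div_const 6)).add
          ((hasDerivAt_pow 5 t).div_const 120)).sub ((hasDerivAt_pow 7 t).div_const 5040))
      refine this.congr_deriv ?_
      push_cast
      ring)
    (by norm_num)
    (fun t ht => by linarith [cos_ge_deg6 ht]) hx
  linarith [h]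

set_option maxHeartbeats 2000000 in
theorem G_neg :
    ∀ x ∈ Set.Ioo (0 : ℝ) (π / 2),
      -3 * x ^ 3 - 9 * x ^ 2 * cos x * sin x + 6 * x * sin x ^ 2
        - 9 * x * cos x ^ 2 * sin x ^ 2 + 14 * cos x * sin x ^ 3
        + cos x ^ 3 * sin x ^ 3 < 0 := by
  rintro x ⟨hx0, hxp⟩
  have hpi : π < 3.1416 := Real.pi_lt_d4
  have hxlt : x < 1.5708 := by linarith
  have hs0 : 0 < sin x := Real.sin_pos_of_pos_of_lt_pi hx0 (by linarith [Real.pi_pos])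
  have hc0 : 0 < cos x := Real.cos_pos_of_mem_Ioo ⟨by linarith, hxp⟩
  have hpyth : sin x ^ 2 + cos x ^ 2 = 1 := Real.sin_sq_add_cos_sq x
  have hsU : sin x ≤ x - x ^ 3 / 6 + x ^ 5 / 120 := sin_le_deg5 hx0.le
  have hsL : x - x ^ 3 / 6 + x ^ 5 / 120 - x ^ 7 / 5040 ≤ sin x := sin_ge_deg7 hx0.le
  have hcU : cos x ≤ 1 - x ^ 2 / 2 + x ^ 4 / 24 := cos_le_deg4 hx0.le
  have hcL : 1 - x ^ 2 / 2 + x ^ 4 / 24 - x ^ 6 / 720 ≤ cos x := cos_ge_deg6 hx0.le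
  have hy : x ^ 2 < 2.4675 := by nlinarith
  have hy0 : (0:ℝ) < x ^ 2 := by positivity
  -- positivity of the lower sine bound and upper cosine bound
  have hLs0 : 0 ≤ x - x ^ 3 / 6 + x ^ 5 / 120 - x ^ 7 / 5040 := by
    nlinarith [hx0, hy, sq_nonneg (x ^ 2), mul_pos hx0 hy0, pow_pos hx0 3, pow_pos hx0 5, pow_pos hx0 7]
  have hUs0 : 0 ≤ x - x ^ 3 / 6 + x ^ 5 / 120 := by nlinarith [pow_pos hx0 7]
  have hUc0 : (0:ℝ) ≤ 1 - x ^ 2 / 2 + x ^ 4 / 24 := by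
    nlinarith [sq_nonneg (x ^ 2 - 3), hy]
  -- term bounds
  have t1 : (1 - x ^ 2 / 2 + x ^ 4 / 24 - x ^ 6 / 720) * (x - x ^ 3 / 6 + x ^ 5 / 120 - x ^ 7 / 5040)
      ≤ cos x * sin x := by
    rcases le_or_gt 0 (1 - x ^ 2 / 2 + x ^ 4 / 24 - x ^ 6 / 720) with h | h
    · exact mul_le_mul hcL hsL hLs0 hc0.le
    · nlinarith [mul_pos hc0 hs0, mul_nonpos_of_nonpos_of_nonneg h.le hLs0]
  have t2 : sin x ^ 2 ≤ (x - x ^ 3 / 6 + x ^ 5 / 120) ^ 2 := pow_le_pow_left₀ hs0.le hsU 2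
  have hc2 : cos x ^ 2 = 1 - sin x ^ 2 := by linarith
  have key3 : cos x ^ 2 * sin x ^ 2 = sin x ^ 2 - sin x ^ 2 * sin x ^ 2 := by
    rw [hc2]; ring
  have hsL2 : (x - x ^ 3 / 6 + x ^ 5 / 120 - x ^ 7 / 5040) ^ 2 ≤ sin x ^ 2 :=
    pow_le_pow_left₀ hLs0 hsL 2
  have hsU4 : sin x ^ 4 ≤ (x - x ^ 3 / 6 + x ^ 5 / 120) ^ 4 := pow_le_pow_left₀ hs0.le hsU 4
  have t3 : (x - x ^ 3 / 6 + x ^ 5 / 120 - x ^ 7 / 5040) ^ 2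
      - (x - x ^ 3 / 6 + x ^ 5 / 120) ^ 4 ≤ cos x ^ 2 * sin x ^ 2 := by
    linarith [hsL2, hsU4, key3]
  have hs3 : sin x ^ 3 ≤ (x - x ^ 3 / 6 + x ^ 5 / 120) ^ 3 := pow_le_pow_left₀ hs0.le hsU 3
  have t4 : cos x * sin x ^ 3 ≤ (1 - x ^ 2 / 2 + x ^ 4 / 24) * (x - x ^ 3 / 6 + x ^ 5 / 120) ^ 3 :=
    calc cos x * sin x ^ 3 ≤ (1 - x ^ 2 / 2 + x ^ 4 / 24) * sin x ^ 3 :=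
          mul_le_mul_of_nonneg_right hcU (by positivity)
      _ ≤ (1 - x ^ 2 / 2 + x ^ 4 / 24) * (x - x ^ 3 / 6 + x ^ 5 / 120) ^ 3 :=
          mul_le_mul_of_nonneg_left hs3 hUc0
  have t5 : cos x ^ 3 * sin x ^ 3
      ≤ (1 - x ^ 2 / 2 + x ^ 4 / 24) ^ 3 * (x - x ^ 3 / 6 + x ^ 5 / 120) ^ 3 :=
    mul_le_mul (pow_le_pow_left₀ hc0.le hcU 3) hs3 (by positivity) (by positivity)
  -- the one-variable polynomial estimate
  have hYy : (0:ℝ) ≤ 2.4675 - x ^ 2 := by linarith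
  have b0 : (0:ℝ) ≤ (2.4675 - x ^ 2) ^ 5 := by positivity
  have b1 : (0:ℝ) ≤ x ^ 2 * (2.4675 - x ^ 2) ^ 4 := by positivity
  have b2 : (0:ℝ) ≤ (x ^ 2) ^ 2 * (2.4675 - x ^ 2) ^ 3 := by positivity
  have b3 : (0:ℝ) ≤ (x ^ 2) ^ 3 * (2.4675 - x ^ 2) ^ 2 := by positivity
  have b4 : (0:ℝ) ≤ (x ^ 2) ^ 4 * (2.4675 - x ^ 2) := by positivity
  have b5 : (0:ℝ) < (x ^ 2) ^ 5 := by positivity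
  have hQ5 : (-53/315) * x ^ 0 + (36167/302400) * x ^ 2 + (-5069/129600) * x ^ 4 + (499/66150) * x ^ 6 + (-491/518400) * x ^ 8 + (3341/41472000) * x ^ 10 < 0 := by linarith [b0, b1, b2, b3, b4, b5]
  have h67 : (x ^ 2) ^ 6 * ((-8689/1866240000) + (11/62208000) * x ^ 2) ≤ 0 :=
    mul_nonpos_of_nonneg_of_nonpos (by positivity) (by nlinarith)
  have h89 : (x ^ 2) ^ 8 * ((-1/248832000) + (1/23887872000) * x ^ 2) ≤ 0 :=
    mul_nonpos_of_nonneg_of_nonpos (by positivity) (by nlinarith)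
  have hQ : (-53/315) * x ^ 0 + (36167/302400) * x ^ 2 + (-5069/129600) * x ^ 4 + (499/66150) * x ^ 6 + (-491/518400) * x ^ 8 + (3341/41472000) * x ^ 10 + (-8689/1866240000) * x ^ 12 + (11/62208000) * x ^ 14 + (-1/248832000) * x ^ 16 + (1/23887872000) * x ^ 18 < 0 := by linarith [hQ5, h67, h89]
  have hP : x ^ 9 * ((-53/315) * x ^ 0 + (36167/302400) * x ^ 2 + (-5069/129600) * x ^ 4 + (499/66150) * x ^ 6 + (-491/518400) * x ^ 8 + (3341/41472000) * x ^ 10 + (-8689/1866240000) * x ^ 12 + (11/62208000) * x ^ 14 + (-1/248832000) * x ^ 16 + (1/23887872000) * x ^ 18) < 0 :=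
    mul_neg_of_pos_of_neg (pow_pos hx0 9) hQ
  -- combine
  have T1 : -(9 * x ^ 2) * (cos x * sin x) ≤ -(9 * x ^ 2) *
      ((1 - x ^ 2 / 2 + x ^ 4 / 24 - x ^ 6 / 720) * (x - x ^ 3 / 6 + x ^ 5 / 120 - x ^ 7 / 5040)) := by
    have := mul_le_mul_of_nonneg_left t1 (by positivity : (0:ℝ) ≤ 9 * x ^ 2)
    linarith
  have T2 : 6 * x * sin x ^ 2 ≤ 6 * x * (x - x ^ 3 / 6 + x ^ 5 / 120) ^ 2 := by
    have := mul_le_mul_of_nonneg_left t2 (by positivity : (0:ℝ) ≤ 6 * x)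
    linarith
  have T3 : -(9 * x) * (cos x ^ 2 * sin x ^ 2) ≤ -(9 * x) *
      ((x - x ^ 3 / 6 + x ^ 5 / 120 - x ^ 7 / 5040) ^ 2 - (x - x ^ 3 / 6 + x ^ 5 / 120) ^ 4) := by
    have := mul_le_mul_of_nonneg_left t3 (by positivity : (0:ℝ) ≤ 9 * x)
    linarith
  linarith [T1, T2, T3, t4, t5, hP]
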